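/- There exists an absolute constant C > 0 such that for every nonnegative ω ∈ L¹(Π) ∩ L²(Π), the function 𝒢ω satisfies the uniform bound ‖𝒢ω‖_{L^∞(Π)} ≤ C ‖ω‖_{L¹(Π)}^{1/2} ‖ω‖_{L²(Π)}^{1/2}. -/

import Mathlib

open MeasureTheory Real Filter

noncomputable section

/-- The upper half plane `Π = {x ∈ ℝ² : x₂ > 0}`. -/
def UHP : Set (ℝ × ℝ) := {x | 0 < x.2}

/-- Euclidean norm of a point of `ℝ²`. -/
def rad (x : ℝ × ℝ) : ℝ := Real.sqrt (x.1 ^ 2 + x.2 ^ 2)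

/-- Modified Bessel function of the second kind of order `0`:
`K₀(r) = ∫₀^∞ exp(-r cosh t) dt`. -/
def K0 (r : ℝ) : ℝ := ∫ t in Set.Ioi (0 : ℝ), Real.exp (-(r * Real.cosh t))

/-- Fundamental solution `G(x,y) = (1/2π) K₀(|x-y|)` of `−Δ + Id` on `ℝ²`. -/
def Gker (x y : ℝ × ℝ) : ℝ := (1 / (2 * Real.pi)) * K0 (rad (x - y))

/-- Reflection `x̄ = (x₁, −x₂)` across the `x₁`-axis. -/
def reflPt (x : ℝ × ℝ) : ℝ × ℝ := (x.1, -x.2)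

/-- Green's function `G_Π(x,y) = G(x,y) − G(x̄,y)` of `−Δ + Id` on the half plane. -/
def GUHP (x y : ℝ × ℝ) : ℝ := Gker x y - Gker (reflPt x) y

/-- The operator `𝒢ω(x) = ∫_Π G_Π(x,y) ω(y) dy`. -/
def Gop (ω : ℝ × ℝ → ℝ) (x : ℝ × ℝ) : ℝ := ∫ y in UHP, GUHP x y * ω y

/-- Kinetic energy `E(ω) = (1/2) ∫_Π ω 𝒢ω`. -/
def kineticE (ω : ℝ × ℝ → ℝ) : ℝ := (1 / 2) * ∫ x in UHP, ω x * Gop ω x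

/-- Impulse `I(ω) = ∫_Π x₂ ω dx`. -/
def impulse (ω : ℝ × ℝ → ℝ) : ℝ := ∫ x in UHP, x.2 * ω x

/-- `L¹(Π)` norm. -/
def normL1 (f : ℝ × ℝ → ℝ) : ℝ := ∫ x in UHP, |f x|

/-- `L²(Π)` norm. -/
def normL2 (f : ℝ × ℝ → ℝ) : ℝ := (∫ x in UHP, (f x) ^ 2) ^ ((1 : ℝ) / 2)

/-- `L^s(Π)` norm. -/
def normLs (s : ℝ) (f : ℝ × ℝ → ℝ) : ℝ := (∫ x in UHP, |f x| ^ s) ^ (1 / s)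

/-- Nonnegative member of `L¹(Π) ∩ L²(Π)`. -/
def NonnegL1L2 (ω : ℝ × ℝ → ℝ) : Prop :=
  (∀ x ∈ UHP, 0 ≤ ω x) ∧ IntegrableOn ω UHP ∧ IntegrableOn (fun x => (ω x) ^ 2) UHP

/-- Steiner symmetry in the `x₁` variable. -/
def SteinerSym (f : ℝ × ℝ → ℝ) : Prop :=
  (∀ x : ℝ × ℝ, f (-x.1, x.2) = f x) ∧
  ∀ x₂ : ℝ, 0 < x₂ → AntitoneOn (fun x₁ => f (x₁, x₂)) (Set.Ioi (0 : ℝ))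

/-- The admissible class `𝒜_{μ,ν}`. -/
def InAdm (μ ν : ℝ) (ω : ℝ × ℝ → ℝ) : Prop :=
  (∀ x ∈ UHP, 0 ≤ ω x) ∧ IntegrableOn ω UHP ∧ IntegrableOn (fun x => (ω x) ^ 2) UHP ∧
  IntegrableOn (fun x => x.2 * ω x) UHP ∧
  impulse ω = μ ∧ (∫ x in UHP, ω x) ≤ ν

/-- The energy functional `ℰ_λ(ω) = E(ω) − (1/(2λ)) ∫_Π ω²`. -/
def Efun (lam : ℝ) (ω : ℝ × ℝ → ℝ) : ℝ :=
  kineticE ω - (1 / (2 * lam)) * ∫ x in UHP, (ω x) ^ 2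

/-- The supremum `S_{μ,ν,λ} = sup_{ω ∈ 𝒜_{μ,ν}} ℰ_λ(ω)`. -/
def Sval (lam μ ν : ℝ) : ℝ := sSup {s | ∃ ω, InAdm μ ν ω ∧ s = Efun lam ω}

/-- `ω` is a maximizer, i.e. `ω ∈ Σ_{μ,ν,λ}`. -/
def IsMaximizer (lam μ ν : ℝ) (ω : ℝ × ℝ → ℝ) : Prop :=
  InAdm μ ν ω ∧ Efun lam ω = Sval lam μ ν

/-- Bessel function of the first kind of order one. -/
def J1 (r : ℝ) : ℝ :=
  ∑' k : ℕ, ((-1 : ℝ) ^ k / ((Nat.factorial k : ℝ) * (Nat.factorial (k + 1) : ℝ))) *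
    (r / 2) ^ (2 * k + 1)

/-- Modified Bessel function of the second kind of order one. -/
def K1 (r : ℝ) : ℝ := ∫ t in Set.Ioi (0 : ℝ), Real.exp (-(r * Real.cosh t)) * Real.cosh t

/-- The set of `t > 0` with `J₁(√(λ−1) t) ≠ 0` solving the transcendental equation
`t (K₁'(t)/K₁(t) + (λ−1)^{-1/2} J₁'(√(λ−1)t)/J₁(√(λ−1)t)) = λ/(λ−1)`. -/
def aSet (lam : ℝ) : Set ℝ :=
  {t | 0 < t ∧ J1 (Real.sqrt (lam - 1) * t) ≠ 0 ∧
    t * (deriv K1 t / K1 t +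
      (1 / Real.sqrt (lam - 1)) *
        (deriv J1 (Real.sqrt (lam - 1) * t) / J1 (Real.sqrt (lam - 1) * t))) = lam / (lam - 1)}

/-- The smallest positive solution `a = a(λ)`. -/
def aLam (lam : ℝ) : ℝ := sInf (aSet lam)

/-- The stream function `Ψ_L^{λ,W}` of the Lamb dipole, written in polar coordinates
`x₁ = r cos θ`, `x₂ = r sin θ` (so that `sin θ = x₂ / r`). -/
def PsiL (lam W : ℝ) (x : ℝ × ℝ) : ℝ :=
  if rad x ≤ aLam lam then
    ((-(W * aLam lam / (lam - 1)) / J1 (Real.sqrt (lam - 1) * aLam lam)) *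
        J1 (Real.sqrt (lam - 1) * rad x) + (W * lam / (lam - 1)) * rad x) * (x.2 / rad x)
  else (W * aLam lam / K1 (aLam lam)) * K1 (rad x) * (x.2 / rad x)

/-- The Lamb dipole `ω_L^{λ,W} = λ (Ψ_L^{λ,W} − W x₂)₊` restricted to `Π`. -/
def omegaL (lam W : ℝ) (x : ℝ × ℝ) : ℝ :=
  if 0 < x.2 then lam * max (PsiL lam W x - W * x.2) 0 else 0

/-- `ϱ(λ) = (∫_Π ω_L^{λ,1} dx) / I(ω_L^{λ,1})`. -/
def varrho (lam : ℝ) : ℝ := (∫ x in UHP, omegaL lam 1 x) / impulse (omegaL lam 1)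

/-- The Laplacian on `ℝ²`, written coordinatewise. -/
def lap (ψ : ℝ × ℝ → ℝ) (x : ℝ × ℝ) : ℝ :=
  deriv (deriv fun t => ψ (t, x.2)) x.1 + deriv (deriv fun t => ψ (x.1, t)) x.2

/-- Distance (in `L¹ ∩ L²` plus weighted `L¹`) from `ζ` to a set of functions `S`. -/
def distToSet (S : Set ((ℝ × ℝ) → ℝ)) (ζ : (ℝ × ℝ) → ℝ) : ℝ :=
  sInf {d | ∃ ω ∈ S, d = normL1 (fun x => ζ x - ω x) + normL2 (fun x => ζ x - ω x) +
    normL1 (fun x => x.2 * (ζ x - ω x))}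

end


section Stmt0Aux

open Set MeasureTheory intervalIntegral

/-- The constant `√(2π)/(2π)`. -/
noncomputable def auxC : ℝ := Real.sqrt (2 * Real.pi) / (2 * Real.pi)

lemma auxC_pos : 0 < auxC := by
  unfold auxC; positivity

lemma aux_cosh_ge (t : ℝ) (ht : 0 ≤ t) : t ^ 2 / 8 ≤ Real.cosh t := by
  have h1 : t / 2 + 1 ≤ Real.exp (t / 2) := Real.add_one_le_exp (t / 2)
  have h2 : Real.exp (t / 2) * Real.exp (t / 2) = Real.exp t := by
    rw [← Real.exp_add]; ring_nf
  have h3 : Real.cosh t = (Real.exp t + Real.exp (-t)) / 2 := Real.cosh_eq t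
  have h4 : (0:ℝ) < Real.exp (-t) := Real.exp_pos _
  nlinarith [mul_self_le_mul_self (by linarith : (0:ℝ) ≤ t / 2 + 1) h1]

lemma aux_K0_nonneg (r : ℝ) : 0 ≤ K0 r :=
  MeasureTheory.integral_nonneg fun t => (Real.exp_pos _).le

lemma aux_K0_le {r : ℝ} (hr : 0 < r) : K0 r ≤ Real.sqrt (2 * Real.pi) / Real.sqrt r := by
  have hb : (0:ℝ) < r / 8 := by linarith
  have hg : Integrable (fun t : ℝ => Real.exp (-(r / 8) * t ^ 2)) := integrable_exp_neg_mul_sq hb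
  have hcont : Continuous fun t : ℝ => Real.exp (-(r * Real.cosh t)) :=
    Real.continuous_exp.comp (Continuous.neg (continuous_const.mul Real.continuous_cosh))
  have hmono : ∀ t ∈ Ioi (0:ℝ), Real.exp (-(r * Real.cosh t)) ≤ Real.exp (-(r / 8) * t ^ 2) := by
    intro t ht
    have h := aux_cosh_ge t (le_of_lt ht)
    have h' : -(r * Real.cosh t) ≤ -(r / 8) * t ^ 2 := by nlinarith
    exact Real.exp_le_exp.2 h'
  have hif : IntegrableOn (fun t : ℝ => Real.exp (-(r * Real.cosh t))) (Ioi 0) := by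
    refine Integrable.mono' hg.integrableOn hcont.aestronglyMeasurable.restrict ?_
    filter_upwards [MeasureTheory.ae_restrict_mem measurableSet_Ioi] with t ht
    rw [Real.norm_eq_abs, abs_of_pos (Real.exp_pos _)]
    exact hmono t ht
  calc K0 r ≤ ∫ t in Ioi (0:ℝ), Real.exp (-(r / 8) * t ^ 2) :=
        setIntegral_mono_on hif hg.integrableOn measurableSet_Ioi hmono
    _ = Real.sqrt (Real.pi / (r / 8)) / 2 := integral_gaussian_Ioi _
    _ = Real.sqrt (2 * Real.pi) / Real.sqrt r := by
        rw [show Real.pi / (r / 8) = 2 ^ 2 * (2 * Real.pi) / r by ring,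
          Real.sqrt_div (by positivity) r, Real.sqrt_mul (by positivity) (2 * Real.pi),
          Real.sqrt_sq (by norm_num : (0:ℝ) ≤ 2)]
        ring

lemma aux_rad_pos {u : ℝ × ℝ} (h : u.1 ≠ 0 ∨ u.2 ≠ 0) : 0 < rad u := by
  rw [rad]
  apply Real.sqrt_pos.2
  rcases h with h | h
  · have h2 : 0 < u.1 ^ 2 := by positivity
    nlinarith [sq_nonneg u.2]
  · have h2 : 0 < u.2 ^ 2 := by positivity
    nlinarith [sq_nonneg u.1]

lemma aux_abs_fst_le_rad (u : ℝ × ℝ) : |u.1| ≤ rad u := by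
  rw [rad, ← Real.sqrt_sq_eq_abs]
  exact Real.sqrt_le_sqrt (by nlinarith [sq_nonneg u.2])

lemma aux_abs_snd_le_rad (u : ℝ × ℝ) : |u.2| ≤ rad u := by
  rw [rad, ← Real.sqrt_sq_eq_abs]
  exact Real.sqrt_le_sqrt (by nlinarith [sq_nonneg u.1])

lemma aux_sqrt_mul_le_rad (u : ℝ × ℝ) : Real.sqrt (|u.1| * |u.2|) ≤ rad u := by
  rw [rad]
  exact Real.sqrt_le_sqrt (by nlinarith [sq_abs u.1, sq_abs u.2, sq_nonneg (|u.1| - |u.2|)])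

lemma aux_rad_refl {x y : ℝ × ℝ} (hx : 0 < x.2) (hy : 0 < y.2) :
    rad (x - y) ≤ rad (reflPt x - y) := by
  have h1 : (reflPt x - y).1 = x.1 - y.1 := rfl
  have h2 : (reflPt x - y).2 = -x.2 - y.2 := rfl
  have h3 : (x - y).1 = x.1 - y.1 := rfl
  have h4 : (x - y).2 = x.2 - y.2 := rfl
  rw [rad, rad, h1, h2, h3, h4]
  apply Real.sqrt_le_sqrt
  nlinarith [mul_pos hx hy]

lemma aux_GUHP_abs_le {x y : ℝ × ℝ} (hx : 0 < x.2) (hy : 0 < y.2) (hxy : x ≠ y) :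
    |GUHP x y| ≤ auxC / Real.sqrt (rad (x - y)) := by
  have hne : (x - y).1 ≠ 0 ∨ (x - y).2 ≠ 0 := by
    by_contra h
    push_neg at h
    exact hxy (sub_eq_zero.1 (Prod.ext h.1 h.2))
  have hr : 0 < rad (x - y) := aux_rad_pos hne
  have hr2 : rad (x - y) ≤ rad (reflPt x - y) := aux_rad_refl hx hy
  have hrefl_pos : 0 < rad (reflPt x - y) := lt_of_lt_of_le hr hr2
  have hM : (1 / (2 * Real.pi)) * (Real.sqrt (2 * Real.pi) / Real.sqrt (rad (x - y)))
      = auxC / Real.sqrt (rad (x - y)) := by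
    unfold auxC; ring
  have hb1 : Gker x y ≤ auxC / Real.sqrt (rad (x - y)) := by
    rw [← hM]
    exact mul_le_mul_of_nonneg_left (aux_K0_le hr) (by positivity)
  have hb2 : Gker (reflPt x) y ≤ auxC / Real.sqrt (rad (x - y)) := by
    rw [← hM]
    calc Gker (reflPt x) y
        ≤ (1 / (2 * Real.pi)) * (Real.sqrt (2 * Real.pi) / Real.sqrt (rad (reflPt x - y))) :=
          mul_le_mul_of_nonneg_left (aux_K0_le hrefl_pos) (by positivity)
      _ ≤ (1 / (2 * Real.pi)) * (Real.sqrt (2 * Real.pi) / Real.sqrt (rad (x - y))) := by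
          have hs1 : 0 < Real.sqrt (rad (x - y)) := Real.sqrt_pos.2 hr
          have hs2 : Real.sqrt (rad (x - y)) ≤ Real.sqrt (rad (reflPt x - y)) :=
            Real.sqrt_le_sqrt hr2
          apply mul_le_mul_of_nonneg_left _ (by positivity)
          exact div_le_div_of_nonneg_left (Real.sqrt_nonneg _) hs1 hs2
  have hn1 : 0 ≤ Gker x y := mul_nonneg (by positivity) (aux_K0_nonneg _)
  have hn2 : 0 ≤ Gker (reflPt x) y := mul_nonneg (by positivity) (aux_K0_nonneg _)
  rw [GUHP, abs_le]
  constructor <;> linarith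

lemma aux_rpow_neg_half_neg {z : ℝ} (hz : z < 0) : z ^ (-(1/2) : ℝ) = 0 := by
  rw [Real.rpow_def_of_neg hz,
    show (-(1/2) : ℝ) * Real.pi = -(Real.pi / 2) by ring, Real.cos_neg,
    Real.cos_pi_div_two, mul_zero]

lemma aux_rpow_half_neg {z : ℝ} (hz : z < 0) : z ^ ((1:ℝ)/2) = 0 := by
  rw [Real.rpow_def_of_neg hz,
    show ((1:ℝ)/2) * Real.pi = Real.pi / 2 by ring, Real.cos_pi_div_two, mul_zero]

lemma aux_abs_rpow_eq (v : ℝ) :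
    |v| ^ (-(1/2) : ℝ) = v ^ (-(1/2) : ℝ) + (-v) ^ (-(1/2) : ℝ) := by
  rcases lt_trichotomy v 0 with h | h | h
  · rw [abs_of_neg h, aux_rpow_neg_half_neg h]; ring
  · rw [h]
    simp [Real.zero_rpow (show (-(1/2) : ℝ) ≠ 0 by norm_num)]
  · rw [abs_of_pos h, aux_rpow_neg_half_neg (by linarith : -v < 0)]; ring

lemma aux_oneDim_ii (a b : ℝ) :
    IntervalIntegrable (fun v : ℝ => |v| ^ (-(1/2) : ℝ)) volume a b := by
  have h1 : IntervalIntegrable (fun v : ℝ => v ^ (-(1/2) : ℝ)) volume a b :=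
    intervalIntegrable_rpow' (by norm_num)
  have h2 : IntervalIntegrable (fun v : ℝ => (-v) ^ (-(1/2) : ℝ)) volume a b := by
    have h3 : IntervalIntegrable (fun v : ℝ => v ^ (-(1/2) : ℝ)) volume (-a) (-b) :=
      intervalIntegrable_rpow' (by norm_num)
    simpa using (IntervalIntegrable.iff_comp_neg (by simp)).1 h3
  simpa only [aux_abs_rpow_eq] using h1.add h2

lemma aux_oneDim_val {δ : ℝ} (hδ : 0 < δ) :
    ∫ v in Icc (-δ) δ, |v| ^ (-(1/2) : ℝ) = 4 * Real.sqrt δ := by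
  have hab : (-δ : ℝ) ≤ δ := by linarith
  have e1 : ∫ v in (-δ)..δ, (v : ℝ) ^ (-(1/2) : ℝ) = 2 * Real.sqrt δ := by
    rw [integral_rpow (Or.inl (by norm_num : (-1:ℝ) < -(1/2)))]
    rw [show (-(1/2) : ℝ) + 1 = (1:ℝ)/2 by norm_num,
      aux_rpow_half_neg (by linarith : (-δ:ℝ) < 0), sub_zero, ← Real.sqrt_eq_rpow]
    ring
  have e2 : ∫ v in (-δ)..δ, ((-v : ℝ)) ^ (-(1/2) : ℝ) = 2 * Real.sqrt δ := by
    rw [intervalIntegral.integral_comp_neg fun v : ℝ => v ^ (-(1/2) : ℝ)]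
    simpa using e1
  have h1 : IntervalIntegrable (fun v : ℝ => v ^ (-(1/2) : ℝ)) volume (-δ) δ :=
    intervalIntegrable_rpow' (by norm_num)
  have h2 : IntervalIntegrable (fun v : ℝ => (-v) ^ (-(1/2) : ℝ)) volume (-δ) δ := by
    have h3 : IntervalIntegrable (fun v : ℝ => v ^ (-(1/2) : ℝ)) volume δ (-δ) :=
      intervalIntegrable_rpow' (by norm_num)
    simpa using (IntervalIntegrable.iff_comp_neg (by simp)).1 h3
  rw [MeasureTheory.integral_Icc_eq_integral_Ioc, ← intervalIntegral.integral_of_le hab]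
  calc ∫ v in (-δ)..δ, |v| ^ (-(1/2) : ℝ)
      = ∫ v in (-δ)..δ, (v ^ (-(1/2) : ℝ) + (-v) ^ (-(1/2) : ℝ)) :=
        intervalIntegral.integral_congr fun v _ => aux_abs_rpow_eq v
    _ = (∫ v in (-δ)..δ, (v : ℝ) ^ (-(1/2) : ℝ))
        + ∫ v in (-δ)..δ, ((-v : ℝ)) ^ (-(1/2) : ℝ) := intervalIntegral.integral_add h1 h2
    _ = 4 * Real.sqrt δ := by rw [e1, e2]; ring

lemma aux_oneDim (c : ℝ) {δ : ℝ} (hδ : 0 < δ) :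
    IntegrableOn (fun u : ℝ => |c - u| ^ (-(1/2) : ℝ)) (Icc (c - δ) (c + δ)) ∧
      ∫ u in Icc (c - δ) (c + δ), |c - u| ^ (-(1/2) : ℝ) = 4 * Real.sqrt δ := by
  have hab : c - δ ≤ c + δ := by linarith
  have hii : IntervalIntegrable (fun u : ℝ => |c - u| ^ (-(1/2) : ℝ)) volume (c - δ) (c + δ) := by
    have h2 : IntervalIntegrable (fun u : ℝ => |u - c| ^ (-(1/2) : ℝ)) volume (-δ + c) (δ + c) :=
      (aux_oneDim_ii (-δ) δ).comp_sub_right c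
    rw [show -δ + c = c - δ by ring, show δ + c = c + δ by ring] at h2
    have h3 := h2
    apply h3.congr
    intro u _
    dsimp only
    rw [abs_sub_comm]
  constructor
  · exact (intervalIntegrable_iff_integrableOn_Icc_of_le hab).1 hii
  · rw [MeasureTheory.integral_Icc_eq_integral_Ioc, ← intervalIntegral.integral_of_le hab]
    calc ∫ u in (c - δ)..(c + δ), |c - u| ^ (-(1/2) : ℝ)
        = ∫ u in (c - δ)..(c + δ), |u - c| ^ (-(1/2) : ℝ) :=
          intervalIntegral.integral_congr fun u _ => by rw [abs_sub_comm]
      _ = ∫ v in (c - δ - c)..(c + δ - c), |v| ^ (-(1/2) : ℝ) :=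
          intervalIntegral.integral_comp_sub_right (fun v : ℝ => |v| ^ (-(1/2) : ℝ)) c
      _ = 4 * Real.sqrt δ := by
          rw [show c - δ - c = -δ by ring, show c + δ - c = δ by ring,
            intervalIntegral.integral_of_le (by linarith : (-δ:ℝ) ≤ δ),
            ← MeasureTheory.integral_Icc_eq_integral_Ioc]
          exact aux_oneDim_val hδ

lemma aux_twoDim (x : ℝ × ℝ) {δ : ℝ} (hδ : 0 < δ) :
    IntegrableOn (fun y : ℝ × ℝ => |x.1 - y.1| ^ (-(1/2) : ℝ) * |x.2 - y.2| ^ (-(1/2) : ℝ))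
      (Icc (x.1 - δ) (x.1 + δ) ×ˢ Icc (x.2 - δ) (x.2 + δ)) ∧
    ∫ y in Icc (x.1 - δ) (x.1 + δ) ×ˢ Icc (x.2 - δ) (x.2 + δ),
        |x.1 - y.1| ^ (-(1/2) : ℝ) * |x.2 - y.2| ^ (-(1/2) : ℝ) = 16 * δ := by
  obtain ⟨i1, v1⟩ := aux_oneDim x.1 hδ
  obtain ⟨i2, v2⟩ := aux_oneDim x.2 hδ
  constructor
  · rw [IntegrableOn, Measure.volume_eq_prod, ← Measure.prod_restrict]
    exact Integrable.mul_prod i1 i2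
  · rw [Measure.volume_eq_prod, MeasureTheory.setIntegral_prod_mul
      (fun u : ℝ => |x.1 - u| ^ (-(1/2) : ℝ)) (fun u : ℝ => |x.2 - u| ^ (-(1/2) : ℝ)), v1, v2]
    have h := Real.mul_self_sqrt hδ.le
    nlinarith [Real.sqrt_nonneg δ]

lemma aux_line1_null (c : ℝ) : (volume : Measure (ℝ × ℝ)) {y : ℝ × ℝ | y.1 = c} = 0 := by
  have h : {y : ℝ × ℝ | y.1 = c} = ({c} : Set ℝ) ×ˢ (univ : Set ℝ) := by
    ext y
    constructor
    · intro hy; exact ⟨hy, trivial⟩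
    · intro hy; exact hy.1
  rw [h, Measure.volume_eq_prod, Measure.prod_prod]
  simp

lemma aux_line2_null (c : ℝ) : (volume : Measure (ℝ × ℝ)) {y : ℝ × ℝ | y.2 = c} = 0 := by
  have h : {y : ℝ × ℝ | y.2 = c} = (univ : Set ℝ) ×ˢ ({c} : Set ℝ) := by
    ext y
    constructor
    · intro hy; exact ⟨trivial, hy⟩
    · intro hy; exact hy.2
  rw [h, Measure.volume_eq_prod, Measure.prod_prod]
  simp

lemma aux_amgm {t P w : ℝ} (ht : 0 < t) :
    P * w ≤ t / 2 * P ^ 2 + 1 / (2 * t) * w ^ 2 := by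
  have h1 : 2 * t * (P * w) ≤ t ^ 2 * P ^ 2 + w ^ 2 := by
    nlinarith [sq_nonneg (t * P - w)]
  have h2t : (0:ℝ) < 2 * t := by linarith
  have h2 : P * w ≤ (t ^ 2 * P ^ 2 + w ^ 2) / (2 * t) := by
    rw [le_div_iff₀ h2t]; linarith
  have h3 : (t ^ 2 * P ^ 2 + w ^ 2) / (2 * t) = t / 2 * P ^ 2 + 1 / (2 * t) * w ^ 2 := by
    field_simp
  rw [← h3]
  exact h2

lemma aux_final {c sA qB : ℝ} (hc : 0 < c) (hsA : 0 < sA) (hqB : 0 < qB) :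
    c * (8 * (qB ^ 3 / (4 * sA)) * (sA ^ 2 / qB ^ 2) + qB ^ 4 / (2 * (qB ^ 3 / (4 * sA))))
      + c / (sA / qB) * sA ^ 2 ≤ 10 * c * sA * qB := by
  have heq : c * (8 * (qB ^ 3 / (4 * sA)) * (sA ^ 2 / qB ^ 2)
      + qB ^ 4 / (2 * (qB ^ 3 / (4 * sA)))) + c / (sA / qB) * sA ^ 2
      = 5 * c * (sA * qB) := by
    field_simp
    ring
  rw [heq]
  nlinarith [mul_pos hc (mul_pos hsA hqB)]

lemma aux_rpow_quarter_sq {z : ℝ} (hz : 0 < z) :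
    (z ^ (-(1/4) : ℝ)) ^ 2 = z ^ (-(1/2) : ℝ) := by
  rw [← Real.rpow_natCast (z ^ (-(1/4) : ℝ)) 2, ← Real.rpow_mul hz.le]
  norm_num

end Stmt0Aux

set_option maxHeartbeats 1000000 in
/-- uniform bound `‖𝒢ω‖_∞ ≤ C ‖ω‖₁^{1/2} ‖ω‖₂^{1/2}`. -/
theorem stmt0 :
    ∃ C : ℝ, 0 < C ∧ ∀ ω : ℝ × ℝ → ℝ, NonnegL1L2 ω →
      ∀ x ∈ UHP, |Gop ω x| ≤ C * normL1 ω ^ ((1 : ℝ) / 2) * normL2 ω ^ ((1 : ℝ) / 2) := by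
  refine ⟨10 * auxC, by linarith [auxC_pos], ?_⟩
  intro ω hω x hx
  obtain ⟨hω0, hω1, hω2⟩ := hω
  have hx2 : 0 < x.2 := hx
  have hUHPm : MeasurableSet UHP := measurableSet_lt measurable_const measurable_snd
  have hN1 : 0 ≤ normL1 ω := MeasureTheory.integral_nonneg fun y => abs_nonneg _
  have hB00 : 0 ≤ ∫ y in UHP, (ω y) ^ 2 := MeasureTheory.integral_nonneg fun y => sq_nonneg _
  have hN2 : 0 ≤ normL2 ω := Real.rpow_nonneg hB00 _
  have hRHS0 : 0 ≤ 10 * auxC * normL1 ω ^ ((1:ℝ)/2) * normL2 ω ^ ((1:ℝ)/2) := by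
    have h1 : 0 ≤ normL1 ω ^ ((1:ℝ)/2) := Real.rpow_nonneg hN1 _
    have h2 : 0 ≤ normL2 ω ^ ((1:ℝ)/2) := Real.rpow_nonneg hN2 _
    have h3 := auxC_pos
    exact mul_nonneg (mul_nonneg (by linarith) h1) h2
  have hGop : Gop ω x = ∫ y in UHP, GUHP x y * ω y := rfl
  by_cases hInt : Integrable (fun y => GUHP x y * ω y) (volume.restrict UHP)
  swap
  · rw [hGop, MeasureTheory.integral_undef hInt, abs_zero]
    exact hRHS0
  set A := ∫ y in UHP, ω y with hA_def
  set B := ∫ y in UHP, (ω y) ^ 2 with hB_def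
  have hA0 : 0 ≤ A := MeasureTheory.setIntegral_nonneg hUHPm hω0
  have hB0 : 0 ≤ B := hB00
  have hω0' : (0 : ℝ × ℝ → ℝ) ≤ᵐ[volume.restrict UHP] ω := by
    filter_upwards [MeasureTheory.ae_restrict_mem hUHPm] with y hy using hω0 y hy
  have hL1 : normL1 ω = A :=
    MeasureTheory.setIntegral_congr_fun hUHPm fun y hy => abs_of_nonneg (hω0 y hy)
  have hL2 : normL2 ω = B ^ ((1:ℝ)/2) := by rw [hB_def]; rfl
  have hzero : ω =ᵐ[volume.restrict UHP] 0 →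
      |Gop ω x| ≤ 10 * auxC * normL1 ω ^ ((1:ℝ)/2) * normL2 ω ^ ((1:ℝ)/2) := by
    intro hz
    have hz2 : (fun y => GUHP x y * ω y) =ᵐ[volume.restrict UHP] 0 := by
      filter_upwards [hz] with y hy
      simp only [Pi.zero_apply] at hy ⊢
      rw [hy, mul_zero]
    rw [hGop, MeasureTheory.integral_congr_ae hz2]
    simpa using hRHS0
  rcases eq_or_lt_of_le hA0 with hA | hA
  · exact hzero ((MeasureTheory.integral_eq_zero_iff_of_nonneg_ae hω0' hω1).1 hA.symm)
  rcases eq_or_lt_of_le hB0 with hB | hB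
  · refine hzero ?_
    have hz2 : (fun y => (ω y) ^ 2) =ᵐ[volume.restrict UHP] 0 :=
      (MeasureTheory.integral_eq_zero_iff_of_nonneg_ae
        (Filter.Eventually.of_forall fun y => sq_nonneg _) hω2).1 hB.symm
    filter_upwards [hz2] with y hy
    simp only [Pi.zero_apply] at hy ⊢
    exact (pow_eq_zero_iff (by norm_num)).1 hy
  -- main case
  set sA := Real.sqrt A with hsA_def
  set qB := Real.sqrt (Real.sqrt B) with hqB_def
  have hsA : 0 < sA := Real.sqrt_pos.2 hA
  have hqB : 0 < qB := Real.sqrt_pos.2 (Real.sqrt_pos.2 hB)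
  have hsA2 : sA ^ 2 = A := Real.sq_sqrt hA.le
  have hqB4 : qB ^ 4 = B := by
    have h1 : qB ^ 2 = Real.sqrt B := Real.sq_sqrt (Real.sqrt_nonneg B)
    have h2 : Real.sqrt B ^ 2 = B := Real.sq_sqrt hB.le
    nlinarith
  clear_value sA qB
  clear_value A B
  have hsAne : sA ≠ 0 := ne_of_gt hsA
  have hqBne : qB ≠ 0 := ne_of_gt hqB
  set δ := sA ^ 2 / qB ^ 2 with hδ_def
  have hδ : 0 < δ := by
    rw [hδ_def]; exact div_pos (pow_pos hsA 2) (pow_pos hqB 2)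
  have hsqδ : Real.sqrt δ = sA / qB := by
    rw [hδ_def, Real.sqrt_div (sq_nonneg sA), Real.sqrt_sq hsA.le, Real.sqrt_sq hqB.le]
  clear_value δ
  set t := qB ^ 3 / (4 * sA) with ht_def
  have ht : 0 < t := by
    rw [ht_def]; exact div_pos (pow_pos hqB 3) (by linarith)
  clear_value t
  have htne : t ≠ 0 := ne_of_gt ht
  set N := {y : ℝ × ℝ | rad (x - y) ≤ δ} with hN_def
  have hcont : Continuous fun y : ℝ × ℝ => rad (x - y) := by
    unfold rad
    fun_prop
  have hNm : MeasurableSet N := (isClosed_le hcont continuous_const).measurableSet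
  -- near field
  have hQi := (aux_twoDim x hδ).1
  have hQv := (aux_twoDim x hδ).2
  have hsubQ : N ∩ UHP ⊆ Set.Icc (x.1 - δ) (x.1 + δ) ×ˢ Set.Icc (x.2 - δ) (x.2 + δ) := by
    rintro y ⟨hyN, _⟩
    have hyN' : rad (x - y) ≤ δ := hyN
    have h1 : |(x - y).1| ≤ rad (x - y) := aux_abs_fst_le_rad _
    have h2 : |(x - y).2| ≤ rad (x - y) := aux_abs_snd_le_rad _
    rw [Prod.fst_sub] at h1
    rw [Prod.snd_sub] at h2
    have ha := abs_le.1 (le_trans h1 hyN')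
    have hb := abs_le.1 (le_trans h2 hyN')
    exact ⟨⟨by linarith [ha.2], by linarith [ha.1]⟩, ⟨by linarith [hb.2], by linarith [hb.1]⟩⟩
  have hnear : (∫ y in N, |GUHP x y * ω y| ∂(volume.restrict UHP))
      ≤ auxC * (8 * t * δ + B / (2 * t)) := by
    rw [Measure.restrict_restrict hNm]
    have hFi : Integrable (fun y => |GUHP x y * ω y|) (volume.restrict (N ∩ UHP)) := by
      rw [← Measure.restrict_restrict hNm]
      exact hInt.abs.restrict
    have hgi : IntegrableOn
        (fun y : ℝ × ℝ => |x.1 - y.1| ^ (-(1/2) : ℝ) * |x.2 - y.2| ^ (-(1/2) : ℝ)) (N ∩ UHP) :=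
      hQi.mono_set hsubQ
    have hω2i : IntegrableOn (fun y : ℝ × ℝ => ω y ^ 2) (N ∩ UHP) :=
      hω2.mono_set Set.inter_subset_right
    have hae : ∀ᵐ y ∂(volume.restrict (N ∩ UHP)), y.1 ≠ x.1 ∧ y.2 ≠ x.2 := by
      apply ae_restrict_of_ae
      have e1 : ∀ᵐ y : ℝ × ℝ ∂volume, y.1 ≠ x.1 := by
        rw [ae_iff]
        have h : {y : ℝ × ℝ | ¬y.1 ≠ x.1} = {y : ℝ × ℝ | y.1 = x.1} := by
          ext y; simp
        rw [h]
        exact aux_line1_null x.1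
      have e2 : ∀ᵐ y : ℝ × ℝ ∂volume, y.2 ≠ x.2 := by
        rw [ae_iff]
        have h : {y : ℝ × ℝ | ¬y.2 ≠ x.2} = {y : ℝ × ℝ | y.2 = x.2} := by
          ext y; simp
        rw [h]
        exact aux_line2_null x.2
      filter_upwards [e1, e2] with y h1 h2 using ⟨h1, h2⟩
    have hptw : ∀ᵐ y ∂(volume.restrict (N ∩ UHP)),
        |GUHP x y * ω y| ≤ auxC * (t / 2 * (|x.1 - y.1| ^ (-(1/2) : ℝ) * |x.2 - y.2| ^ (-(1/2) : ℝ))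
          + 1 / (2 * t) * ω y ^ 2) := by
      filter_upwards [hae, MeasureTheory.ae_restrict_mem (hNm.inter hUHPm)] with y hyl hymem
      obtain ⟨hy1, hy2⟩ := hyl
      obtain ⟨hyN, hyU⟩ := hymem
      have hyU' : 0 < y.2 := hyU
      have hxyne : x ≠ y := fun h => hy1 (by rw [h])
      have haa : (0:ℝ) < |x.1 - y.1| := abs_pos.2 (sub_ne_zero.2 fun h => hy1 h.symm)
      have hbb : (0:ℝ) < |x.2 - y.2| := abs_pos.2 (sub_ne_zero.2 fun h => hy2 h.symm)
      have hωy : 0 ≤ ω y := hω0 y hyU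
      have hG := aux_GUHP_abs_le hx2 hyU' hxyne
      have hulb : Real.sqrt (|x.1 - y.1| * |x.2 - y.2|) ≤ rad (x - y) := by
        have h := aux_sqrt_mul_le_rad (x - y)
        rwa [Prod.fst_sub, Prod.snd_sub] at h
      have hq : |x.1 - y.1| ^ ((1:ℝ)/4) * |x.2 - y.2| ^ ((1:ℝ)/4) ≤ Real.sqrt (rad (x - y)) := by
        have h4 : Real.sqrt (Real.sqrt (|x.1 - y.1| * |x.2 - y.2|)) ≤ Real.sqrt (rad (x - y)) :=
          Real.sqrt_le_sqrt hulb
        refine le_trans (le_of_eq ?_) h4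
        rw [Real.sqrt_eq_rpow, Real.sqrt_eq_rpow,
          ← Real.rpow_mul (mul_nonneg haa.le hbb.le), Real.mul_rpow haa.le hbb.le]
        norm_num
      set P := |x.1 - y.1| ^ (-(1/4) : ℝ) * |x.2 - y.2| ^ (-(1/4) : ℝ) with hP_def
      clear_value P
      have hPpos : 0 < |x.1 - y.1| ^ ((1:ℝ)/4) * |x.2 - y.2| ^ ((1:ℝ)/4) := by positivity
      have hPval : auxC / (|x.1 - y.1| ^ ((1:ℝ)/4) * |x.2 - y.2| ^ ((1:ℝ)/4)) = auxC * P := by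
        rw [hP_def, Real.rpow_neg haa.le, Real.rpow_neg hbb.le]
        ring
      have hGP : |GUHP x y| ≤ auxC * P := by
        refine hG.trans ?_
        rw [← hPval]
        exact div_le_div_of_nonneg_left auxC_pos.le hPpos hq
      have hPsq : P ^ 2 = |x.1 - y.1| ^ (-(1/2) : ℝ) * |x.2 - y.2| ^ (-(1/2) : ℝ) := by
        rw [hP_def, mul_pow, aux_rpow_quarter_sq haa, aux_rpow_quarter_sq hbb]
      have hkey : P * ω y ≤ t / 2 * P ^ 2 + 1 / (2 * t) * ω y ^ 2 := aux_amgm ht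
      calc |GUHP x y * ω y| = |GUHP x y| * ω y := by rw [abs_mul, abs_of_nonneg hωy]
        _ ≤ auxC * P * ω y := mul_le_mul_of_nonneg_right hGP hωy
        _ = auxC * (P * ω y) := by ring
        _ ≤ auxC * (t / 2 * P ^ 2 + 1 / (2 * t) * ω y ^ 2) :=
            mul_le_mul_of_nonneg_left hkey auxC_pos.le
        _ = auxC * (t / 2 * (|x.1 - y.1| ^ (-(1/2) : ℝ) * |x.2 - y.2| ^ (-(1/2) : ℝ))
            + 1 / (2 * t) * ω y ^ 2) := by rw [hPsq]
    have hRi : Integrable (fun y : ℝ × ℝ => auxC * (t / 2 * (|x.1 - y.1| ^ (-(1/2) : ℝ)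
        * |x.2 - y.2| ^ (-(1/2) : ℝ)) + 1 / (2 * t) * ω y ^ 2))
        (volume.restrict (N ∩ UHP)) := by
      apply MeasureTheory.Integrable.const_mul
      exact (hgi.const_mul _).add (hω2i.const_mul _)
    calc (∫ y in N ∩ UHP, |GUHP x y * ω y|)
        ≤ ∫ y in N ∩ UHP, auxC * (t / 2 * (|x.1 - y.1| ^ (-(1/2) : ℝ)
            * |x.2 - y.2| ^ (-(1/2) : ℝ)) + 1 / (2 * t) * ω y ^ 2) :=
          MeasureTheory.integral_mono_ae hFi hRi hptw
      _ = auxC * (t / 2 * (∫ y in N ∩ UHP, |x.1 - y.1| ^ (-(1/2) : ℝ)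
            * |x.2 - y.2| ^ (-(1/2) : ℝ)) + 1 / (2 * t) * ∫ y in N ∩ UHP, ω y ^ 2) := by
          rw [MeasureTheory.integral_const_mul,
            MeasureTheory.integral_add (hgi.const_mul _) (hω2i.const_mul _),
            MeasureTheory.integral_const_mul, MeasureTheory.integral_const_mul]
      _ ≤ auxC * (t / 2 * (16 * δ) + 1 / (2 * t) * B) := by
          have h16 : (∫ y in N ∩ UHP, |x.1 - y.1| ^ (-(1/2) : ℝ)
              * |x.2 - y.2| ^ (-(1/2) : ℝ)) ≤ 16 * δ := by
            rw [← hQv]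
            exact MeasureTheory.setIntegral_mono_set hQi
              (Filter.Eventually.of_forall fun y =>
                mul_nonneg (Real.rpow_nonneg (abs_nonneg _) _) (Real.rpow_nonneg (abs_nonneg _) _))
              (HasSubset.Subset.eventuallyLE hsubQ)
          have hω2le : (∫ y in N ∩ UHP, ω y ^ 2) ≤ B := by
            rw [hB_def]
            exact MeasureTheory.setIntegral_mono_set hω2
              (Filter.Eventually.of_forall fun y => sq_nonneg _)
              (HasSubset.Subset.eventuallyLE Set.inter_subset_right)
          apply mul_le_mul_of_nonneg_left _ auxC_pos.le
          apply add_le_add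
          · exact mul_le_mul_of_nonneg_left h16 (by positivity)
          · exact mul_le_mul_of_nonneg_left hω2le (by positivity)
      _ = auxC * (8 * t * δ + B / (2 * t)) := by ring
  -- far field
  have hfar : (∫ y in Nᶜ, |GUHP x y * ω y| ∂(volume.restrict UHP)) ≤ auxC / Real.sqrt δ * A := by
    rw [Measure.restrict_restrict hNm.compl]
    have hFi : Integrable (fun y => |GUHP x y * ω y|) (volume.restrict (Nᶜ ∩ UHP)) := by
      rw [← Measure.restrict_restrict hNm.compl]
      exact hInt.abs.restrict
    have hωi : IntegrableOn (fun y : ℝ × ℝ => auxC / Real.sqrt δ * ω y) (Nᶜ ∩ UHP) :=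
      (hω1.mono_set Set.inter_subset_right).const_mul _
    have hpt : ∀ y ∈ Nᶜ ∩ UHP, |GUHP x y * ω y| ≤ auxC / Real.sqrt δ * ω y := by
      rintro y ⟨hyN, hyU⟩
      have hyU' : 0 < y.2 := hyU
      have hyN' : ¬rad (x - y) ≤ δ := hyN
      have hrδ : δ ≤ rad (x - y) := (lt_of_not_ge hyN').le
      have hxyne : x ≠ y := by
        intro h
        apply hyN'
        rw [h, sub_self]
        have h0 : rad (0 : ℝ × ℝ) = 0 := by simp [rad]
        rw [h0]
        exact hδ.le
      have hωy : 0 ≤ ω y := hω0 y hyU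
      calc |GUHP x y * ω y| = |GUHP x y| * ω y := by rw [abs_mul, abs_of_nonneg hωy]
        _ ≤ auxC / Real.sqrt (rad (x - y)) * ω y :=
            mul_le_mul_of_nonneg_right (aux_GUHP_abs_le hx2 hyU' hxyne) hωy
        _ ≤ auxC / Real.sqrt δ * ω y := by
            have h1 : Real.sqrt δ ≤ Real.sqrt (rad (x - y)) := Real.sqrt_le_sqrt hrδ
            have h2 : 0 < Real.sqrt δ := Real.sqrt_pos.2 hδ
            exact mul_le_mul_of_nonneg_right
              (div_le_div_of_nonneg_left auxC_pos.le h2 h1) hωy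
    calc (∫ y in Nᶜ ∩ UHP, |GUHP x y * ω y|)
        ≤ ∫ y in Nᶜ ∩ UHP, auxC / Real.sqrt δ * ω y :=
          MeasureTheory.setIntegral_mono_on hFi hωi (hNm.compl.inter hUHPm) hpt
      _ = auxC / Real.sqrt δ * ∫ y in Nᶜ ∩ UHP, ω y := MeasureTheory.integral_const_mul _ _
      _ ≤ auxC / Real.sqrt δ * A := by
          apply mul_le_mul_of_nonneg_left _ (div_nonneg auxC_pos.le (Real.sqrt_nonneg _))
          rw [hA_def]
          exact MeasureTheory.setIntegral_mono_set hω1 hω0'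
            (HasSubset.Subset.eventuallyLE Set.inter_subset_right)
  -- assemble
  have hsplit := MeasureTheory.integral_add_compl (μ := volume.restrict UHP) hNm hInt.abs
  have habs : |Gop ω x| ≤ ∫ y in UHP, |GUHP x y * ω y| := by
    rw [hGop]
    calc |∫ y in UHP, GUHP x y * ω y| = ‖∫ y in UHP, GUHP x y * ω y‖ :=
          (Real.norm_eq_abs _).symm
      _ ≤ ∫ y in UHP, ‖GUHP x y * ω y‖ := norm_integral_le_integral_norm _
      _ = ∫ y in UHP, |GUHP x y * ω y| := by simp only [Real.norm_eq_abs]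
  have hfinal : |Gop ω x| ≤ auxC * (8 * t * δ + B / (2 * t)) + auxC / Real.sqrt δ * A := by
    refine habs.trans ?_
    rw [← hsplit]
    exact add_le_add hnear hfar
  rw [hL1, hL2]
  have hpow1 : A ^ ((1:ℝ)/2) = sA := by rw [hsA_def, Real.sqrt_eq_rpow]
  have hpow2 : (B ^ ((1:ℝ)/2)) ^ ((1:ℝ)/2) = qB := by
    rw [hqB_def, Real.sqrt_eq_rpow, Real.sqrt_eq_rpow]
  rw [hpow1, hpow2]
  refine hfinal.trans ?_
  rw [hsqδ, ht_def, hδ_def, ← hsA2, ← hqB4]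
  exact aux_final auxC_pos hsA hqB
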